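/- Let m ≥ 1 and r ≥ 1. For every labeling f of the graph mK_r, we have M(f) ≥ mr²(mr+1)²/8 − mr(mr+1)(2mr+1)/12 (an inequality of rational numbers). -/

import Mathlib

open Finset

/-- The product-sum M(f) of a vertex labeling: the sum of `f u * f v` over all edges
`{u,v}` of `G`, each edge counted exactly once. -/
noncomputable def prodSum {V : Type*} [Fintype V] (G : SimpleGraph V) (f : V → ℕ) : ℕ := by
  classical
  exact ∑ e ∈ G.edgeFinset, Sym2.lift ⟨fun u v => f u * f v, fun u v => Nat.mul_comm _ _⟩ e

/-- A labeling of a graph on `V`: a bijection from the vertices onto `{1,…,|V|}`. -/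
def IsLabeling (V : Type*) [Fintype V] (f : V → ℕ) : Prop :=
  Set.BijOn f Set.univ (Set.Icc 1 (Fintype.card V))

/-- MinPS of `G`: the minimum of `M(f)` over all labelings `f`. -/
noncomputable def minPS {V : Type*} [Fintype V] (G : SimpleGraph V) : ℕ :=
  sInf { m | ∃ f : V → ℕ, IsLabeling V f ∧ prodSum G f = m }

/-- `mK_r`: the vertex-disjoint union of `m` copies of the complete graph `K_r`.
Vertex `(i, x)` lies in the `i`-th copy; two vertices are adjacent iff they are
distinct and lie in the same copy. -/
def mKGraph (m r : ℕ) : SimpleGraph (Fin m × Fin r) where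
  Adj a b := a.1 = b.1 ∧ a.2 ≠ b.2
  symm := ⟨fun a b h => ⟨h.1.symm, h.2.symm⟩⟩
  loopless := ⟨fun a h => h.2 rfl⟩

lemma two_mul_prodSum {V : Type*} [Fintype V] [DecidableEq V] (G : SimpleGraph V)
    [DecidableRel G.Adj] (f : V → ℕ) :
    2 * prodSum G f = ∑ p ∈ univ.filter (fun p : V × V => G.Adj p.1 p.2), f p.1 * f p.2 := by
  classical
  set L : Sym2 V → ℕ := Sym2.lift ⟨fun u v => f u * f v, fun u v => Nat.mul_comm _ _⟩ with hL
  have h1 : (∑ p ∈ univ.filter (fun p : V × V => G.Adj p.1 p.2), f p.1 * f p.2)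
      = ∑ d : G.Dart, L d.edge := by
    refine (Finset.sum_bij (fun (d : G.Dart) _ => d.toProd) ?_ ?_ ?_ ?_).symm
    · intro d _; simp [d.adj]
    · intro a _ b _ h; exact SimpleGraph.Dart.toProd_injective h
    · intro p hp
      simp only [Finset.mem_filter] at hp
      exact ⟨⟨p, hp.2⟩, Finset.mem_univ _, rfl⟩
    · intro d _
      rcases d with ⟨⟨a, b⟩, hab⟩
      rfl
  rw [h1]
  rw [← Finset.sum_fiberwise_of_maps_to (g := SimpleGraph.Dart.edge) (t := G.edgeFinset)
      (fun d _ => by rw [SimpleGraph.mem_edgeFinset]; exact d.edge_mem)]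
  have : ∀ e ∈ G.edgeFinset, (∑ d ∈ univ.filter (fun d : G.Dart => d.edge = e), L d.edge)
      = 2 * L e := by
    intro e he
    have hcard : (univ.filter (fun d : G.Dart => d.edge = e)).card = 2 := by
      have := G.dart_edge_fiber_card e (SimpleGraph.mem_edgeFinset.mp he)
      simpa using this
    calc (∑ d ∈ univ.filter (fun d : G.Dart => d.edge = e), L d.edge)
        = ∑ d ∈ univ.filter (fun d : G.Dart => d.edge = e), L e := by
          apply Finset.sum_congr rfl; intro d hd
          rw [(Finset.mem_filter.mp hd).2]
      _ = 2 * L e := by rw [Finset.sum_const, hcard]; ring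
  rw [Finset.sum_congr rfl this, ← Finset.mul_sum]
  congr 1
  simp only [prodSum, hL]
  apply Finset.sum_congr _ fun _ _ => rfl
  congr!

instance (m r : ℕ) : DecidableRel (mKGraph m r).Adj := fun _ _ => instDecidableAnd

lemma offdiag_sum (n : ℕ) (g : Fin n → ℕ) :
    ∑ q ∈ univ.filter (fun q : Fin n × Fin n => q.1 ≠ q.2), g q.1 * g q.2
      + ∑ x : Fin n, g x ^ 2 = (∑ x : Fin n, g x) ^ 2 := by
  have hsq : (∑ x : Fin n, g x) ^ 2 = ∑ p ∈ (univ ×ˢ univ : Finset (Fin n × Fin n)), g p.1 * g p.2 := by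
    rw [sq, Finset.sum_mul_sum, Finset.sum_product]
  have hdiag : ∑ p ∈ (univ ×ˢ univ : Finset (Fin n × Fin n)).filter (fun q => ¬ q.1 ≠ q.2),
      g p.1 * g p.2 = ∑ x : Fin n, g x ^ 2 := by
    refine Finset.sum_nbij' (fun p => p.1) (fun x => (x, x)) ?_ ?_ ?_ ?_ ?_
    · intro p hp; exact Finset.mem_univ _
    · intro x _; simp
    · intro p hp
      simp only [Finset.mem_filter, not_not] at hp
      rw [Prod.ext_iff]; exact ⟨rfl, hp.2⟩
    · intro x _; rfl
    · intro p hp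
      simp only [Finset.mem_filter, not_not] at hp
      rw [← hp.2, sq]
  rw [hsq, ← Finset.sum_filter_add_sum_filter_not (univ ×ˢ univ) (fun q => q.1 ≠ q.2), hdiag]
  congr 1

lemma group_sum (m r : ℕ) (f : Fin m × Fin r → ℕ) :
    ∑ p ∈ univ.filter (fun p : (Fin m × Fin r) × (Fin m × Fin r) => (mKGraph m r).Adj p.1 p.2),
        f p.1 * f p.2
      = ∑ i : Fin m, ∑ q ∈ univ.filter (fun q : Fin r × Fin r => q.1 ≠ q.2),
          f (i, q.1) * f (i, q.2) := by
  rw [← Finset.sum_product']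
  refine Finset.sum_nbij' (fun p => (p.1.1, (p.1.2, p.2.2))) (fun s => ((s.1, s.2.1), (s.1, s.2.2)))
      ?_ ?_ ?_ ?_ ?_
  · intro p hp
    simp only [Finset.mem_filter, Finset.mem_product, Finset.mem_univ, true_and] at hp ⊢
    exact hp.2
  · intro s hs
    simp only [Finset.mem_filter, Finset.mem_product, Finset.mem_univ, true_and] at hs ⊢
    exact ⟨rfl, hs⟩
  · intro p hp
    simp only [Finset.mem_filter, Finset.mem_univ, true_and] at hp
    obtain ⟨⟨a1, a2⟩, ⟨b1, b2⟩⟩ := p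
    obtain ⟨h1, _⟩ := hp
    cases h1
    rfl
  · intro s _; rfl
  · intro p hp
    simp only [Finset.mem_filter, Finset.mem_univ, true_and] at hp
    obtain ⟨⟨a1, a2⟩, ⟨b1, b2⟩⟩ := p
    obtain ⟨h1, _⟩ := hp
    cases h1
    rfl

lemma label_sum {V : Type*} [Fintype V] (f : V → ℕ)
    (hf : Set.BijOn f Set.univ (Set.Icc 1 (Fintype.card V))) (g : ℕ → ℚ) :
    ∑ v : V, g (f v) = ∑ k ∈ Finset.Icc 1 (Fintype.card V), g k := by
  refine Finset.sum_nbij (fun v => f v) ?_ ?_ ?_ ?_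
  · intro v _
    have := hf.mapsTo (Set.mem_univ v)
    rw [Finset.mem_Icc]; rwa [Set.mem_Icc] at this
  · intro a _ b _ h
    exact hf.injOn (Set.mem_univ a) (Set.mem_univ b) h
  · intro k hk
    rw [Finset.coe_Icc] at hk
    obtain ⟨v, _, hv⟩ := hf.surjOn hk
    exact ⟨v, by simp [hv]⟩
  · intro v _; rfl

lemma sum_Icc_id (N : ℕ) : ∑ k ∈ Finset.Icc 1 N, (k : ℚ) = N * (N + 1) / 2 := by
  induction N with
  | zero => simp
  | succ n ih =>
    rw [Finset.sum_Icc_succ_top (Nat.le_add_left 1 n), ih]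
    push_cast; ring

lemma sum_Icc_sq (N : ℕ) : ∑ k ∈ Finset.Icc 1 N, (k : ℚ) ^ 2 = N * (N + 1) * (2 * N + 1) / 6 := by
  induction N with
  | zero => simp
  | succ n ih =>
    rw [Finset.sum_Icc_succ_top (Nat.le_add_left 1 n), ih]
    push_cast; ring


/-- For `m ≥ 1`, `r ≥ 1`, every labeling `f` of `mK_r` satisfies
`M(f) ≥ mr²(mr+1)²/8 − mr(mr+1)(2mr+1)/12`. -/
theorem statement3 (m r : ℕ) (hm : 1 ≤ m) (hr : 1 ≤ r)
    (f : Fin m × Fin r → ℕ) (hf : IsLabeling (Fin m × Fin r) f) :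
    (m : ℚ) * r ^ 2 * (m * r + 1) ^ 2 / 8 - m * r * (m * r + 1) * (2 * m * r + 1) / 12 ≤
      (prodSum (mKGraph m r) f : ℚ) := by
  classical
  have hcard : Fintype.card (Fin m × Fin r) = m * r := by simp
  set S : Fin m → ℕ := fun i => ∑ x : Fin r, f (i, x) with hS
  have key : 2 * prodSum (mKGraph m r) f + ∑ v : Fin m × Fin r, f v ^ 2
      = ∑ i : Fin m, S i ^ 2 := by
    rw [two_mul_prodSum, group_sum, Fintype.sum_prod_type, ← Finset.sum_add_distrib]
    exact Finset.sum_congr rfl fun i _ => offdiag_sum r (fun x => f (i, x))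
  have keyQ : 2 * (prodSum (mKGraph m r) f : ℚ) + ∑ v : Fin m × Fin r, (f v : ℚ) ^ 2
      = ∑ i : Fin m, (S i : ℚ) ^ 2 := by exact_mod_cast congrArg (Nat.cast (R := ℚ)) key
  have hQ2 : ∑ v : Fin m × Fin r, (f v : ℚ) ^ 2
      = (m * r : ℚ) * (m * r + 1) * (2 * (m * r) + 1) / 6 := by
    have h := label_sum f hf (fun k => (k : ℚ) ^ 2)
    rw [h, hcard, sum_Icc_sq]; push_cast; ring
  have hT : ∑ i : Fin m, (S i : ℚ) = (m * r : ℚ) * (m * r + 1) / 2 := by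
    have h1 : ∑ i : Fin m, (S i : ℚ) = ∑ v : Fin m × Fin r, (f v : ℚ) := by
      rw [Fintype.sum_prod_type]
      exact Finset.sum_congr rfl fun i _ => by push_cast [hS]; rfl
    rw [h1, label_sum f hf (fun k => (k : ℚ)), hcard, sum_Icc_id]; push_cast; ring
  have cheb : (∑ i : Fin m, (S i : ℚ)) ^ 2 ≤ (m : ℚ) * ∑ i : Fin m, (S i : ℚ) ^ 2 := by
    have h := sq_sum_le_card_mul_sum_sq (s := (univ : Finset (Fin m)))
      (f := fun i => (S i : ℚ))
    simpa using h
  rw [hT, ← keyQ, hQ2] at cheb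
  have hmq : (0 : ℚ) < m := by exact_mod_cast hm
  rw [sub_le_iff_le_add]
  nlinarith [cheb, hmq, sq_nonneg ((m : ℚ) * r)]
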